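/- Let p be a prime, q a power of p that is a perfect square, and n ≥ 0. Then Σ over types (c_1,...,c_n) with Σ i·c_i = n of N(c_1,...,c_n) · Π_{p|i} (-q)^{c_i} · Π_{p∤i} (√q)^{c_i} equals n! · Σ_{i+pj=n, i≥0} (-1)^j · C(√q - 1 + i, √q - 1) · C((q+√q)/p, j), where N(c_1,...,c_n) = n!/Π_i (i^{c_i} c_i!). -/

import Mathlib

open Finset Equiv Equiv.Perm PowerSeries

namespace Stmt15


variable {α : Type*} [Fintype α] [DecidableEq α]

lemma cyc_idem (g : Equiv.Perm α) (x : α) :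
    (g.cycleOf x).cycleOf x = g.cycleOf x := by
  by_cases h : g x = x
  · rw [(Equiv.Perm.cycleOf_eq_one_iff g).2 h, Equiv.Perm.cycleOf_one]
  · exact (Equiv.Perm.isCycle_cycleOf g h).cycleOf_eq
      (by rw [Equiv.Perm.cycleOf_apply_self]; exact h)

lemma valid_structure {c : Equiv.Perm α} {x : α} (hc : c.cycleOf x = c) (h1 : c ≠ 1) :
    c.IsCycle ∧ x ∈ c.support := by
  by_cases h : c x = x
  · exact absurd ((Equiv.Perm.cycleOf_eq_one_iff c).2 h ▸ hc).symm h1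
  · exact ⟨hc ▸ Equiv.Perm.isCycle_cycleOf c h, Equiv.Perm.mem_support.2 h⟩

lemma perm_invariant {σ : Equiv.Perm α} {K : Finset α} (h : ∀ x ∈ K, σ x ∈ K) :
    ∀ x, σ x ∈ K ↔ x ∈ K := by
  have himg : K.image σ = K := by
    apply Finset.eq_of_subset_of_card_le
    · intro y hy
      obtain ⟨x, hx, rfl⟩ := Finset.mem_image.1 hy
      exact h x hx
    · rw [Finset.card_image_of_injective _ σ.injective]
  intro x
  constructor
  · intro hx
    rw [← himg] at hx
    obtain ⟨y, hy, hyx⟩ := Finset.mem_image.1 hx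
    rwa [← σ.injective hyx]
  · exact h x

noncomputable section

def A (f : ℕ → ℤ) (n : ℕ) : ℤ :=
  ∑ σ : Equiv.Perm (Fin n), ((Equiv.Perm.partition σ).parts.map f).prod

set_option maxHeartbeats 1000000 in
lemma fiber_sum (f : ℕ → ℤ) (N : ℕ) (c : Equiv.Perm (Fin (N + 1)))
    (hcval : c.cycleOf 0 = c) :
    ∑ g ∈ Finset.univ.filter (fun g : Equiv.Perm (Fin (N + 1)) => g.cycleOf 0 = c),
        ((Equiv.Perm.partition g).parts.map f).prod
      = f ((c.support ∪ {0}).card) * A f (N + 1 - (c.support ∪ {0}).card) := by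
  classical
  set K : Finset (Fin (N + 1)) := c.support ∪ {0} with hK
  set m : ℕ := K.card with hm
  have h0K : (0 : Fin (N + 1)) ∈ K := Finset.mem_union_right _ (Finset.mem_singleton_self 0)
  have hm1 : 1 ≤ m := Finset.card_pos.2 ⟨0, h0K⟩
  have hmN : m ≤ N + 1 := by
    have := Finset.card_le_univ K
    simpa using this
  have hsupp : c.support ⊆ K := Finset.subset_union_left
  have hKc : ∀ x ∈ K, c x ∈ K := by
    intro x hx
    by_cases hxs : x ∈ c.support
    · exact hsupp (Equiv.Perm.apply_mem_support.2 hxs)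
    · rwa [Equiv.Perm.notMem_support.1 hxs]
  set r : ℕ := N + 1 - m with hr
  have hcard : Fintype.card {x : Fin (N + 1) // x ∈ (Kᶜ : Finset (Fin (N + 1)))} = r := by
    rw [Fintype.card_coe, Finset.card_compl]
    simp [hr, hm]
  obtain ⟨e⟩ : Nonempty (Fin r ≃ {x : Fin (N + 1) // x ∈ (Kᶜ : Finset (Fin (N + 1)))}) :=
    ⟨(Fintype.equivFinOfCardEq hcard).symm⟩
  set ifun : Equiv.Perm (Fin r) → Equiv.Perm (Fin (N + 1)) :=
    fun τ => c * τ.extendDomain e with hifun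
  set jfun : Equiv.Perm (Fin (N + 1)) → Equiv.Perm (Fin r) :=
    fun g => if h : ∀ x : Fin (N + 1), (x ∈ (Kᶜ : Finset (Fin (N+1)))) ↔ (g x ∈ (Kᶜ : Finset (Fin (N+1)))) then
      (Equiv.permCongr e.symm) (g.subtypePerm (fun x => (h x).symm)) else 1 with hjfun
  have hu_supp : ∀ τ : Equiv.Perm (Fin r), (τ.extendDomain e).support ⊆ Kᶜ := by
    intro τ y hy
    rw [Equiv.Perm.support_extend_domain] at hy
    obtain ⟨x, _, rfl⟩ := Finset.mem_map.1 hy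
    exact (e x).2
  have hdisj : ∀ τ : Equiv.Perm (Fin r), Equiv.Perm.Disjoint c (τ.extendDomain e) := by
    intro τ
    rw [Equiv.Perm.disjoint_iff_disjoint_support]
    exact Finset.disjoint_of_subset_left hsupp
      (Finset.disjoint_of_subset_right (hu_supp τ) disjoint_compl_right)
  have hufix : ∀ (τ : Equiv.Perm (Fin r)) (x : Fin (N + 1)), x ∈ K → τ.extendDomain e x = x := by
    intro τ x hx
    apply Equiv.Perm.notMem_support.1
    intro hmem
    exact absurd hx (Finset.mem_compl.1 (hu_supp τ hmem))
  have hcfix : ∀ x : Fin (N + 1), x ∈ (Kᶜ : Finset (Fin (N+1))) → c x = x := by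
    intro x hx
    apply Equiv.Perm.notMem_support.1
    intro hmem
    exact absurd (hsupp hmem) (Finset.mem_compl.1 hx)
  -- membership of ifun τ in the fiber
  have hj : ∀ τ : Equiv.Perm (Fin r), (ifun τ).cycleOf 0 = c := by
    intro τ
    by_cases hc1 : c = 1
    · subst hc1
      rw [hifun]
      simp only [one_mul]
      rw [Equiv.Perm.cycleOf_eq_one_iff]
      exact hufix τ 0 h0K
    · obtain ⟨hcyc, h0s⟩ := valid_structure hcval hc1
      have hmemf : c ∈ (ifun τ).cycleFactorsFinset := by
        rw [Equiv.Perm.mem_cycleFactorsFinset_iff]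
        refine ⟨hcyc, fun a ha => ?_⟩
        show c a = (c * τ.extendDomain e) a
        rw [Equiv.Perm.mul_apply, hufix τ a (hsupp ha)]
      exact (Equiv.Perm.cycle_is_cycleOf h0s hmemf).symm
  -- ifun τ preserves K
  have hpres : ∀ τ : Equiv.Perm (Fin r), ∀ x, (ifun τ) x ∈ K ↔ x ∈ K := by
    intro τ
    apply perm_invariant
    intro x hx
    rw [hifun]
    show c (τ.extendDomain e x) ∈ K
    rw [hufix τ x hx]
    exact hKc x hx
  -- elements of the fiber preserve K
  have hgK : ∀ g : Equiv.Perm (Fin (N + 1)), g.cycleOf 0 = c → ∀ x, g x ∈ K ↔ x ∈ K := by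
    intro g hg
    apply perm_invariant
    intro x hx
    rcases Finset.mem_union.1 hx with hxs | hx0
    · rw [← hg] at hxs
      obtain ⟨hsc, h0g⟩ := (Equiv.Perm.mem_support_cycleOf_iff).1 hxs
      have hgx : g x ∈ (g.cycleOf 0).support :=
        (Equiv.Perm.mem_support_cycleOf_iff).2 ⟨hsc.trans ⟨1, by simp⟩, h0g⟩
      rw [hg] at hgx
      exact hsupp hgx
    · rw [Finset.mem_singleton.1 hx0]
      by_cases h00 : g 0 = 0
      · rw [h00]; exact h0K
      · have hgx : g 0 ∈ (g.cycleOf 0).support :=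
          (Equiv.Perm.mem_support_cycleOf_iff).2 ⟨⟨1, by simp⟩, Equiv.Perm.mem_support.2 h00⟩
        rw [hg] at hgx
        exact hsupp hgx
  -- left inverse
  have hleft : ∀ τ : Equiv.Perm (Fin r), jfun (ifun τ) = τ := by
    intro τ
    have hP : ∀ x : Fin (N + 1), (x ∈ (Kᶜ : Finset (Fin (N + 1))))
        ↔ ((ifun τ) x ∈ (Kᶜ : Finset (Fin (N + 1)))) := by
      intro x
      rw [Finset.mem_compl, Finset.mem_compl, not_iff_not]
      exact (hpres τ x).symm
    show (if h : ∀ x : Fin (N + 1), (x ∈ (Kᶜ : Finset (Fin (N+1)))) ↔ ((ifun τ) x ∈ (Kᶜ : Finset (Fin (N+1)))) then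
      (Equiv.permCongr e.symm) ((ifun τ).subtypePerm (fun x => (h x).symm)) else 1) = τ
    rw [dif_pos hP]
    apply Equiv.ext
    intro i
    have h1 : (ifun τ) ↑(e i) = ↑(e (τ i)) := by
      show c (τ.extendDomain e ↑(e i)) = _
      rw [Equiv.Perm.extendDomain_apply_subtype τ e (e i).2, Subtype.coe_eta,
        Equiv.symm_apply_apply]
      exact hcfix _ (e (τ i)).2
    have h2 : ((ifun τ).subtypePerm (fun x => (hP x).symm)) (e i) = e (τ i) := Subtype.ext h1
    rw [Equiv.permCongr_apply, Equiv.symm_symm, h2, Equiv.symm_apply_apply]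
  -- right inverse
  have hright : ∀ g : Equiv.Perm (Fin (N + 1)), g.cycleOf 0 = c → ifun (jfun g) = g := by
    intro g hg
    have hP : ∀ x : Fin (N + 1), (x ∈ (Kᶜ : Finset (Fin (N + 1))))
        ↔ (g x ∈ (Kᶜ : Finset (Fin (N + 1)))) := by
      intro x
      rw [Finset.mem_compl, Finset.mem_compl, not_iff_not]
      exact (hgK g hg x).symm
    have hjg : jfun g = (Equiv.permCongr e.symm) (g.subtypePerm (fun x => (hP x).symm)) := by
      show (if h : ∀ x : Fin (N + 1), (x ∈ (Kᶜ : Finset (Fin (N+1)))) ↔ (g x ∈ (Kᶜ : Finset (Fin (N+1)))) then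
        (Equiv.permCongr e.symm) (g.subtypePerm (fun x => (h x).symm)) else 1) = _
      rw [dif_pos hP]
    rw [hjg]
    apply Equiv.ext
    intro x
    show (c * ((Equiv.permCongr e.symm) (g.subtypePerm (fun x => (hP x).symm))).extendDomain e) x = g x
    by_cases hx : x ∈ K
    · rw [Equiv.Perm.mul_apply,
        Equiv.Perm.extendDomain_apply_not_subtype _ e (by simpa using hx)]
      rcases Finset.mem_union.1 hx with hxs | hx0
      · rw [← hg] at hxs ⊢
        obtain ⟨hsc, _⟩ := (Equiv.Perm.mem_support_cycleOf_iff).1 hxs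
        rw [Equiv.Perm.cycleOf_apply, if_pos hsc]
      · rw [Finset.mem_singleton.1 hx0, ← hg, Equiv.Perm.cycleOf_apply_self]
    · have hx' : x ∈ (Kᶜ : Finset (Fin (N + 1))) := Finset.mem_compl.2 hx
      rw [Equiv.Perm.mul_apply, Equiv.Perm.extendDomain_apply_subtype _ e hx']
      have h3 : ((Equiv.permCongr e.symm) (g.subtypePerm (fun x => (hP x).symm))) (e.symm ⟨x, hx'⟩)
          = e.symm ⟨g x, (hP x).1 hx'⟩ := by
        rw [Equiv.permCongr_apply, Equiv.symm_symm, Equiv.apply_symm_apply]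
        rfl
      rw [h3, Equiv.apply_symm_apply]
      exact hcfix _ ((hP x).1 hx')
  -- value computation
  have hval : ∀ τ : Equiv.Perm (Fin r),
      ((Equiv.Perm.partition (ifun τ)).parts.map f).prod
        = f m * ((Equiv.Perm.partition τ).parts.map f).prod := by
    intro τ
    have hct : (ifun τ).cycleType = c.cycleType + τ.cycleType := by
      show (c * τ.extendDomain e).cycleType = _
      rw [(hdisj τ).cycleType_mul, Equiv.Perm.cycleType_extendDomain]
    have hsc : (ifun τ).support.card = c.support.card + τ.support.card := by
      show (c * τ.extendDomain e).support.card = _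
      rw [(hdisj τ).card_support_mul, Equiv.Perm.card_support_extend_domain]
    have hτcard : τ.support.card ≤ r := by
      simpa using Finset.card_le_univ τ.support
    have hparts : (Equiv.Perm.partition (ifun τ)).parts
        = m ::ₘ (Equiv.Perm.partition τ).parts := by
      rw [Equiv.Perm.parts_partition, Equiv.Perm.parts_partition, hct, hsc]
      by_cases hc1 : c = 1
      · have hm_eq : m = 1 := by
          rw [hm, hK, hc1]
          simp
        have hc_ct : c.cycleType = 0 := by rw [hc1, Equiv.Perm.cycleType_one]
        have hc_sc : c.support.card = 0 := by rw [hc1]; simp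
        rw [hm_eq, hc_ct, hc_sc, zero_add, zero_add]
        have hcards : Fintype.card (Fin (N + 1)) - τ.support.card
            = (Fintype.card (Fin r) - τ.support.card) + 1 := by
          simp only [Fintype.card_fin] at hτcard ⊢
          have hr1 : r = N := by rw [hr, hm_eq]; omega
          omega
        rw [hcards, Multiset.replicate_succ, Multiset.add_cons]
      · obtain ⟨hcyc, h0s⟩ := valid_structure hcval hc1
        have hKsup : K = c.support :=
          Finset.union_eq_left.2 (Finset.singleton_subset_iff.2 h0s)
        have hm_eq : m = c.support.card := by rw [hm, hKsup]
        have hcards : Fintype.card (Fin (N + 1)) - (c.support.card + τ.support.card)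
            = Fintype.card (Fin r) - τ.support.card := by
          simp only [Fintype.card_fin]
          have : c.support.card = m := hm_eq.symm
          omega
        rw [hcyc.cycleType, hcards, ← hm_eq]
        show (↑[m] + τ.cycleType) + _ = _
        rw [Multiset.coe_singleton, Multiset.singleton_add, Multiset.cons_add]
    rw [hparts, Multiset.map_cons, Multiset.prod_cons]
  -- assemble
  have hbij : ∑ τ : Equiv.Perm (Fin r),
        f m * ((Equiv.Perm.partition τ).parts.map f).prod
      = ∑ g ∈ Finset.univ.filter (fun g : Equiv.Perm (Fin (N + 1)) => g.cycleOf 0 = c),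
        ((Equiv.Perm.partition g).parts.map f).prod := by
    refine Finset.sum_nbij' ifun jfun ?_ ?_ ?_ ?_ ?_
    · intro τ _
      simp only [Finset.mem_filter, Finset.mem_univ, true_and]
      exact hj τ
    · intro g _
      exact Finset.mem_univ _
    · intro τ _
      exact hleft τ
    · intro g hg
      exact hright g (Finset.mem_filter.1 hg).2
    · intro τ _
      exact (hval τ).symm
  rw [← hbij, ← Finset.mul_sum, A]

set_option maxHeartbeats 1000000 in
lemma count_succ (N M : ℕ) :
    (Finset.univ.filter (fun c : Equiv.Perm (Fin (N + 1)) =>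
        c.cycleOf 0 = c ∧ (c.support ∪ {0}).card - 1 = M + 1)).card
      = N.descFactorial (M + 1) := by
  classical
  have hsub : Fintype.card {x : Fin (N + 1) // ¬ (x = 0)} = N := by
    rw [Fintype.card_subtype_compl, Fintype.card_subtype_eq, Fintype.card_fin]
    omega
  have htarget : N.descFactorial (M + 1)
      = (Finset.univ : Finset (Fin (M + 1) ↪ {x : Fin (N + 1) // ¬ (x = 0)})).card := by
    rw [Finset.card_univ, Fintype.card_embedding_eq, hsub, Fintype.card_fin]
  rw [htarget]
  have hfact : ∀ c : Equiv.Perm (Fin (N + 1)),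
      c.cycleOf 0 = c → (c.support ∪ {0}).card - 1 = M + 1 →
      c.IsCycle ∧ (0 : Fin (N + 1)) ∈ c.support ∧ (c.toList 0).length = M + 2 := by
    intro c h1 h2
    have hc1 : c ≠ 1 := by
      intro h
      subst h
      simp at h2
    obtain ⟨hcyc, h0s⟩ := valid_structure h1 hc1
    have hKsup : c.support ∪ {0} = c.support :=
      Finset.union_eq_left.2 (Finset.singleton_subset_iff.2 h0s)
    rw [hKsup] at h2
    have hlen : (c.toList 0).length = M + 2 := by
      rw [Equiv.Perm.length_toList, h1]
      have h2le : 2 ≤ c.support.card := hcyc.two_le_card_support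
      omega
    exact ⟨hcyc, h0s, hlen⟩
  refine Finset.card_bij'
    (fun c hc => ⟨fun k => ⟨(c ^ ((k : ℕ) + 1)) 0, by
        have hmem := Finset.mem_filter.1 hc
        obtain ⟨hcyc, h0s, hlen⟩ := hfact c hmem.2.1 hmem.2.2
        intro h0
        have hklt := k.isLt
        have hk1 : (k : ℕ) + 1 < (c.toList 0).length := by rw [hlen]; omega
        have h0' : (0 : ℕ) < (c.toList 0).length := by omega
        have hget1 : (c.toList 0).get ⟨(k : ℕ) + 1, hk1⟩ = (c ^ ((k : ℕ) + 1)) 0 :=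
          Equiv.Perm.getElem_toList c 0 _ hk1
        have hget0 : (c.toList 0).get ⟨0, h0'⟩ = (c ^ (0 : ℕ)) 0 :=
          Equiv.Perm.getElem_toList c 0 _ h0'
        have heq : (c.toList 0).get ⟨(k : ℕ) + 1, hk1⟩ = (c.toList 0).get ⟨0, h0'⟩ := by
          rw [hget1, hget0, h0]; simp
        have := (Equiv.Perm.nodup_toList c 0).get_inj_iff.1 heq
        simp at this⟩, by
      intro k k' hkk
      have hmem := Finset.mem_filter.1 hc
      obtain ⟨hcyc, h0s, hlen⟩ := hfact c hmem.2.1 hmem.2.2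
      have hklt := k.isLt
      have hklt' := k'.isLt
      have hk1 : (k : ℕ) + 1 < (c.toList 0).length := by rw [hlen]; omega
      have hk1' : (k' : ℕ) + 1 < (c.toList 0).length := by rw [hlen]; omega
      have hveq : (c ^ ((k : ℕ) + 1)) 0 = (c ^ ((k' : ℕ) + 1)) 0 := congrArg Subtype.val hkk
      have heq : (c.toList 0).get ⟨(k : ℕ) + 1, hk1⟩ = (c.toList 0).get ⟨(k' : ℕ) + 1, hk1'⟩ := by
        rw [List.get_eq_getElem, List.get_eq_getElem, Equiv.Perm.getElem_toList c 0 _ hk1, Equiv.Perm.getElem_toList c 0 _ hk1', hveq]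
      have := (Equiv.Perm.nodup_toList c 0).get_inj_iff.1 heq
      apply Fin.ext
      simpa using this⟩)
    (fun eb _ => List.formPerm
      ((0 : Fin (N + 1)) :: List.ofFn (fun k : Fin (M + 1) => ((eb k : {x : Fin (N+1) // ¬ (x = 0)}) : Fin (N + 1)))))
    ?_ ?_ ?_ ?_
  · intro c hc
    exact Finset.mem_univ _
  · -- j maps into the filter set
    intro eb _
    set l : List (Fin (N + 1)) :=
      (0 : Fin (N + 1)) :: List.ofFn (fun k : Fin (M + 1) => ((eb k : {x : Fin (N+1) // ¬ (x = 0)}) : Fin (N + 1))) with hl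
    have hlen : l.length = M + 2 := by simp [hl]
    have hnodup : l.Nodup := by
      rw [hl, List.nodup_cons]
      constructor
      · intro hmem
        obtain ⟨k, hk⟩ := List.mem_ofFn.1 hmem
        exact (eb k).2 hk
      · refine List.nodup_ofFn.2 ?_
        intro a b hab
        exact eb.injective (Subtype.ext hab)
    have hne_single : ∀ x : Fin (N + 1), l ≠ [x] := by
      intro x h
      have := congrArg List.length h
      rw [hlen] at this
      simp at this
    have h2len : 2 ≤ l.length := by omega
    have hcyc := List.isCycle_formPerm hnodup h2len
    have hsup := List.support_formPerm_of_nodup l hnodup hne_single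
    have h0l : (0 : Fin (N + 1)) ∈ l := by rw [hl]; exact List.mem_cons_self
    have h0mem : (0 : Fin (N + 1)) ∈ (List.formPerm l).support := by
      rw [hsup]; exact List.mem_toFinset.2 h0l
    rw [Finset.mem_filter]
    refine ⟨Finset.mem_univ _, hcyc.cycleOf_eq (Equiv.Perm.mem_support.1 h0mem), ?_⟩
    have hKsup : (List.formPerm l).support ∪ {0} = (List.formPerm l).support :=
      Finset.union_eq_left.2 (Finset.singleton_subset_iff.2 h0mem)
    rw [hKsup, hsup, List.toFinset_card_of_nodup hnodup, hlen]
    omega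
  · -- left inverse : j (i c) = c
    intro c hc
    have hmem := Finset.mem_filter.1 hc
    obtain ⟨hcyc, h0s, hlen⟩ := hfact c hmem.2.1 hmem.2.2
    have hlist : (0 : Fin (N + 1)) :: List.ofFn (fun k : Fin (M + 1) => (c ^ ((k : ℕ) + 1)) 0)
        = c.toList 0 := by
      refine List.ext_get ?_ ?_
      · simp [hlen]
      · intro n h1 h2
        match n with
        | 0 =>
          show (0 : Fin (N + 1)) = (c.toList 0).get ⟨0, h2⟩
          rw [List.get_eq_getElem, Equiv.Perm.getElem_toList c 0 0 h2, pow_zero, Equiv.Perm.one_apply]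
        | (k + 1) =>
          have hk : k < M + 1 := by
            simp at h1
            omega
          rw [show (c.toList 0).get ⟨k + 1, h2⟩ = _ from Equiv.Perm.getElem_toList c 0 (k + 1) h2, List.get_cons_succ, List.get_ofFn]
          simp
    show ((0 : Fin (N + 1)) :: List.ofFn
        (fun k : Fin (M + 1) => (c ^ ((k : ℕ) + 1)) 0)).formPerm = c
    rw [hlist, Equiv.Perm.formPerm_toList, hmem.2.1]
  · -- right inverse : i (j eb) = eb
    intro eb heb
    set l : List (Fin (N + 1)) :=
      (0 : Fin (N + 1)) :: List.ofFn (fun k : Fin (M + 1) => ((eb k : {x : Fin (N+1) // ¬ (x = 0)}) : Fin (N + 1))) with hl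
    have hlen : l.length = M + 2 := by simp [hl]
    have hnodup : l.Nodup := by
      rw [hl, List.nodup_cons]
      constructor
      · intro hmem
        obtain ⟨k, hk⟩ := List.mem_ofFn.1 hmem
        exact (eb k).2 hk
      · refine List.nodup_ofFn.2 ?_
        intro a b hab
        exact eb.injective (Subtype.ext hab)
    apply Function.Embedding.ext
    intro k
    apply Subtype.ext
    have hklt := k.isLt
    have hlt0 : 0 < l.length := by rw [hlen]; omega
    have key := List.formPerm_pow_apply_getElem l hnodup ((k : ℕ) + 1) 0 hlt0
    have hidx : (0 + ((k : ℕ) + 1)) % l.length = (k : ℕ) + 1 := by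
      rw [hlen, zero_add]
      exact Nat.mod_eq_of_lt (by omega)
    simp only [hidx] at key
    show (List.formPerm l ^ ((k : ℕ) + 1)) 0
      = ((eb k : {x : Fin (N+1) // ¬ (x = 0)}) : Fin (N + 1))
    refine Eq.trans key ?_
    simp only [hl, List.getElem_cons_succ, List.getElem_ofFn, Fin.eta]

lemma count_all (N m : ℕ) :
    (Finset.univ.filter (fun c : Equiv.Perm (Fin (N + 1)) =>
        c.cycleOf 0 = c ∧ (c.support ∪ {0}).card - 1 = m)).card
      = N.descFactorial m := by
  classical
  match m with
  | 0 =>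
    rw [Nat.descFactorial_zero]
    rw [show (Finset.univ.filter (fun c : Equiv.Perm (Fin (N + 1)) =>
        c.cycleOf 0 = c ∧ (c.support ∪ {0}).card - 1 = 0)) = {1} from ?_]
    · exact Finset.card_singleton 1
    ext c
    simp only [Finset.mem_filter, Finset.mem_univ, true_and, Finset.mem_singleton]
    constructor
    · rintro ⟨h1, h2⟩
      by_contra hc1
      obtain ⟨hcyc, h0s⟩ := valid_structure h1 hc1
      have hle : c.support.card ≤ (c.support ∪ {0}).card :=
        Finset.card_le_card Finset.subset_union_left
      have h2le : 2 ≤ c.support.card := hcyc.two_le_card_support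
      omega
    · rintro rfl
      refine ⟨Equiv.Perm.cycleOf_one 0, ?_⟩
      simp
  | (M + 1) => exact count_succ N M

set_option maxHeartbeats 1000000 in
lemma A_succ (f : ℕ → ℤ) (N : ℕ) :
    A f (N + 1) = ∑ m ∈ Finset.range (N + 1),
      (N.descFactorial m : ℤ) * f (m + 1) * A f (N - m) := by
  classical
  have h0 : A f (N + 1) = ∑ c ∈ Finset.univ.filter
        (fun c : Equiv.Perm (Fin (N + 1)) => c.cycleOf 0 = c),
      f ((c.support ∪ {0}).card) * A f (N + 1 - (c.support ∪ {0}).card) := by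
    rw [A, ← Finset.sum_fiberwise Finset.univ
      (fun g : Equiv.Perm (Fin (N + 1)) => g.cycleOf 0)
      (fun g => ((Equiv.Perm.partition g).parts.map f).prod)]
    have hfib : ∀ c : Equiv.Perm (Fin (N + 1)),
        (∑ g ∈ Finset.univ.filter (fun g : Equiv.Perm (Fin (N + 1)) => g.cycleOf 0 = c),
          ((Equiv.Perm.partition g).parts.map f).prod)
        = if c.cycleOf 0 = c then
            f ((c.support ∪ {0}).card) * A f (N + 1 - (c.support ∪ {0}).card) else 0 := by
      intro c
      by_cases hcv : c.cycleOf 0 = c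
      · rw [if_pos hcv]
        exact fiber_sum f N c hcv
      · rw [if_neg hcv]
        apply Finset.sum_eq_zero
        intro g hg
        exfalso
        apply hcv
        rw [← (Finset.mem_filter.1 hg).2]
        exact cyc_idem g 0
    rw [Finset.sum_congr rfl (fun c _ => hfib c), Finset.sum_filter]
  rw [h0]
  have hmap : ∀ c ∈ Finset.univ.filter
      (fun c : Equiv.Perm (Fin (N + 1)) => c.cycleOf 0 = c),
      (c.support ∪ {0}).card - 1 ∈ Finset.range (N + 1) := by
    intro c _
    have h1 : (c.support ∪ {0}).card ≤ N + 1 := by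
      have := Finset.card_le_univ (c.support ∪ {0})
      simpa using this
    rw [Finset.mem_range]
    omega
  rw [← Finset.sum_fiberwise_of_maps_to hmap
    (fun c => f ((c.support ∪ {0}).card) * A f (N + 1 - (c.support ∪ {0}).card))]
  refine Finset.sum_congr rfl fun m hm => ?_
  have hconst : ∀ c ∈ (Finset.univ.filter
      (fun c : Equiv.Perm (Fin (N + 1)) => c.cycleOf 0 = c)).filter
      (fun c => (c.support ∪ {0}).card - 1 = m),
      f ((c.support ∪ {0}).card) * A f (N + 1 - (c.support ∪ {0}).card)
        = f (m + 1) * A f (N - m) := by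
    intro c hc
    have h2 := (Finset.mem_filter.1 hc).2
    have hpos : 0 < (c.support ∪ {0}).card :=
      Finset.card_pos.2 ⟨0, Finset.mem_union_right _ (Finset.mem_singleton_self 0)⟩
    have hcard : (c.support ∪ {0}).card = m + 1 := by omega
    rw [hcard, show N + 1 - (m + 1) = N - m from by omega]
  rw [Finset.sum_congr rfl hconst, Finset.sum_const, Finset.filter_filter, count_all N m,
    nsmul_eq_mul]
  push_cast
  ring

end


noncomputable section




def c (p s t n : ℕ) : ℤ :=
  ∑ ij ∈ (Finset.range (n + 1) ×ˢ Finset.range (n + 1)).filter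
      (fun ij => ij.1 + p * ij.2 = n),
    (-1 : ℤ) ^ ij.2 * ((s - 1 + ij.1).choose (s - 1) : ℤ) * ((t.choose ij.2 : ℤ))

variable (p s t : ℕ)

def G : ℤ⟦X⟧ := (PowerSeries.invOneSubPow ℤ s).val

def P : ℤ⟦X⟧ := (1 - (PowerSeries.X : ℤ⟦X⟧) ^ p) ^ t

def F : ℤ⟦X⟧ := G s * P p t

lemma coeff_G (hs : 0 < s) (n : ℕ) :
    PowerSeries.coeff n (G s) = ((s - 1 + n).choose (s - 1) : ℤ) := by
  rw [G, PowerSeries.invOneSubPow_val_eq_mk_sub_one_add_choose_of_pos ℤ s hs, coeff_mk]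

lemma coeff_P (hp : 0 < p) (k : ℕ) :
    PowerSeries.coeff k (P p t) =
      if p ∣ k then (-1 : ℤ) ^ (k / p) * (t.choose (k / p) : ℤ) else 0 := by
  have hP : P p t = ∑ j ∈ range (t + 1),
      PowerSeries.C ((-1 : ℤ) ^ j * (t.choose j : ℤ)) * X ^ (p * j) := by
    rw [P, sub_eq_add_neg, add_comm, add_pow]
    refine Finset.sum_congr rfl fun j hj => ?_
    rw [one_pow, mul_one, neg_pow, ← pow_mul]
    rw [map_mul, map_pow, map_neg, map_one, ← map_natCast (PowerSeries.C (R := ℤ)) (t.choose j)]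
    ring
  rw [hP, map_sum]
  have hterm : ∀ j, PowerSeries.coeff k
        (PowerSeries.C ((-1 : ℤ) ^ j * (t.choose j : ℤ)) * X ^ (p * j))
      = if k = p * j then (-1 : ℤ) ^ j * (t.choose j : ℤ) else 0 := by
    intro j
    rw [PowerSeries.coeff_C_mul, PowerSeries.coeff_X_pow]
    split <;> simp
  simp_rw [hterm]
  by_cases hd : p ∣ k
  · rw [if_pos hd]
    obtain ⟨j0, rfl⟩ := hd
    have hiff : ∀ j, (p * j0 = p * j) ↔ (j = j0) := by
      intro j; constructor
      · intro h; exact (Nat.eq_of_mul_eq_mul_left hp h).symm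
      · rintro rfl; rfl
    simp_rw [hiff]
    rw [Finset.sum_ite_eq' (range (t + 1)) j0 (fun j => (-1 : ℤ) ^ j * (t.choose j : ℤ))]
    rw [Nat.mul_div_cancel_left j0 hp]
    split
    · rfl
    · rename_i hj0
      have : t < j0 := by simp at hj0; omega
      simp [Nat.choose_eq_zero_of_lt this]
  · rw [if_neg hd]
    refine Finset.sum_eq_zero fun j hj => ?_
    rw [if_neg (fun h => hd ⟨j, h⟩)]

lemma coeff_F (hp : 0 < p) (hs : 0 < s) (n : ℕ) :
    PowerSeries.coeff n (F p s t) = c p s t n := by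
  rw [F, PowerSeries.coeff_mul, c]
  rw [← Finset.sum_filter_add_sum_filter_not (Finset.HasAntidiagonal.antidiagonal n) (fun ik => p ∣ ik.2)]
  have h2 : ∑ ik ∈ (Finset.HasAntidiagonal.antidiagonal n).filter (fun ik => ¬ p ∣ ik.2),
      PowerSeries.coeff ik.1 (G s) * PowerSeries.coeff ik.2 (P p t) = 0 := by
    refine Finset.sum_eq_zero fun ik hik => ?_
    rw [Finset.mem_filter] at hik
    rw [coeff_P p t hp, if_neg hik.2, mul_zero]
  rw [h2, add_zero]
  refine Finset.sum_nbij' (fun ik => (ik.1, ik.2 / p)) (fun ij => (ij.1, p * ij.2))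
    ?_ ?_ ?_ ?_ ?_
  · rintro ⟨i, k⟩ h
    simp only [Finset.mem_filter, Finset.HasAntidiagonal.mem_antidiagonal] at h
    obtain ⟨h1, j, rfl⟩ := h
    simp only [Finset.mem_filter, Finset.mem_product, Finset.mem_range]
    rw [Nat.mul_div_cancel_left j hp]
    constructor
    · constructor <;> nlinarith [hp]
    · exact h1
  · rintro ⟨i, j⟩ h
    simp only [Finset.mem_filter, Finset.mem_product, Finset.mem_range] at h
    simp only [Finset.mem_filter, Finset.HasAntidiagonal.mem_antidiagonal]
    exact ⟨h.2, ⟨j, rfl⟩⟩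
  · rintro ⟨i, k⟩ h
    simp only [Finset.mem_filter, Finset.HasAntidiagonal.mem_antidiagonal] at h
    obtain ⟨h1, j, rfl⟩ := h
    simp [Nat.mul_div_cancel_left j hp]
  · rintro ⟨i, j⟩ h
    simp [Nat.mul_div_cancel_left j hp]
  · rintro ⟨i, k⟩ h
    simp only [Finset.mem_filter, Finset.HasAntidiagonal.mem_antidiagonal] at h
    obtain ⟨h1, j, rfl⟩ := h
    rw [coeff_G s hs, coeff_P p t hp, if_pos ⟨j, rfl⟩]
    simp only [Nat.mul_div_cancel_left j hp, Nat.mul_div_cancel _ hp]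
    ring

lemma one_sub_X_ne : (1 - X : ℤ⟦X⟧) ≠ 0 := fun h => by
  have := congrArg (PowerSeries.constantCoeff) h
  simp at this

lemma deriv_G (hs : 0 < s) :
    (1 - X) * d⁄dX ℤ (G s) = PowerSeries.C (s : ℤ) * G s := by
  have h1 : G s * (1 - X) ^ s = 1 := by
    rw [G, ← PowerSeries.invOneSubPow_inv_eq_one_sub_pow]
    exact (PowerSeries.invOneSubPow ℤ s).val_inv
  have h2 := congrArg (d⁄dX ℤ) h1
  simp only [Derivation.leibniz, Derivation.leibniz_pow, map_sub, PowerSeries.derivative_X,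
    Derivation.map_one_eq_zero, smul_eq_mul, nsmul_eq_mul, zero_sub, mul_neg, mul_one] at h2
  -- h2 : G s * (s * ((1 - X) ^ (s - 1) * -1)) + (1 - X) ^ s * D(G s) = 0
  have h3 : (1 - X : ℤ⟦X⟧) ^ (s - 1) * ((1 - X) * d⁄dX ℤ (G s))
      = (1 - X : ℤ⟦X⟧) ^ (s - 1) * (PowerSeries.C (s : ℤ) * G s) := by
    have hpow : (1 - X : ℤ⟦X⟧) ^ s = (1 - X) ^ (s - 1) * (1 - X) := by
      rw [← pow_succ, Nat.sub_add_cancel hs]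
    rw [hpow] at h2
    have hC : (PowerSeries.C (s : ℤ)) = ((s : ℕ) : ℤ⟦X⟧) := by
      rw [map_natCast]
    rw [hC]
    linear_combination h2
  exact mul_left_cancel₀ (pow_ne_zero _ one_sub_X_ne) h3

lemma one_sub_X_pow : (1 - X ^ p : ℤ⟦X⟧) = (1 - X) * ∑ i ∈ range p, X ^ i := by
  have := geom_sum_mul (X : ℤ⟦X⟧) p
  linear_combination this

lemma deriv_F (hs : 0 < s) (ht : 0 < t) :
    (1 - X ^ p) * d⁄dX ℤ (F p s t)
      = (PowerSeries.C (s : ℤ) * (∑ i ∈ range p, X ^ i)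
          - PowerSeries.C ((p * t : ℕ) : ℤ) * X ^ (p - 1)) * F p s t := by
  have hDP : d⁄dX ℤ (P p t)
      = (t : ℤ⟦X⟧) * ((1 - X ^ p) ^ (t - 1) * (-((p : ℤ⟦X⟧) * X ^ (p - 1)))) := by
    rw [P]
    simp only [Derivation.leibniz_pow, map_sub, Derivation.map_one_eq_zero,
      PowerSeries.derivative_X, smul_eq_mul, nsmul_eq_mul, zero_sub, mul_one]
  have hPP : (1 - X ^ p : ℤ⟦X⟧) * (1 - X ^ p) ^ (t - 1) = (1 - X ^ p) ^ t := by
    rw [← pow_succ', Nat.sub_add_cancel ht]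
  have hF : d⁄dX ℤ (F p s t) = G s * d⁄dX ℤ (P p t) + P p t * d⁄dX ℤ (G s) := by
    rw [F, Derivation.leibniz]; simp only [smul_eq_mul]
  rw [hF, hDP, mul_add]
  have hterm2 : (1 - X ^ p : ℤ⟦X⟧) * (P p t * d⁄dX ℤ (G s))
      = PowerSeries.C (s : ℤ) * (∑ i ∈ range p, X ^ i) * F p s t := by
    rw [one_sub_X_pow, F]
    have := deriv_G s hs
    linear_combination (∑ i ∈ range p, (X : ℤ⟦X⟧) ^ i) * P p t * this
  have hterm1 : (1 - X ^ p : ℤ⟦X⟧) *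
        (G s * ((t : ℤ⟦X⟧) * ((1 - X ^ p) ^ (t - 1) * (-((p : ℤ⟦X⟧) * X ^ (p - 1))))))
      = -(PowerSeries.C ((p * t : ℕ) : ℤ) * X ^ (p - 1) * F p s t) := by
    rw [F, P]
    have hC : (PowerSeries.C ((p * t : ℕ) : ℤ)) = ((p : ℤ⟦X⟧)) * ((t : ℤ⟦X⟧)) := by
      rw [map_natCast]
      push_cast
      ring
    rw [hC]
    linear_combination -(G s * (t : ℤ⟦X⟧) * (p : ℤ⟦X⟧) * X ^ (p - 1)) * hPP
  rw [hterm1, hterm2]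
  ring

lemma star (hp : 0 < p) (hs : 0 < s) (ht : 0 < t) (N : ℕ) :
    ((N + 1 : ℕ) : ℤ) * c p s t (N + 1)
      = (if p ≤ N then ((N + 1 - p : ℕ) : ℤ) * c p s t (N + 1 - p) else 0)
        + (s : ℤ) * ∑ i ∈ range p, (if i ≤ N then c p s t (N - i) else 0)
        - ((p * t : ℕ) : ℤ) * (if p - 1 ≤ N then c p s t (N + 1 - p) else 0) := by
  have hE := deriv_F p s t hs ht
  have hE2 : d⁄dX ℤ (F p s t) - X ^ p * d⁄dX ℤ (F p s t)
      = PowerSeries.C (s : ℤ) * (∑ i ∈ range p, X ^ i * F p s t)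
        - PowerSeries.C ((p * t : ℕ) : ℤ) * (X ^ (p - 1) * F p s t) := by
    rw [sub_mul, sub_mul, mul_assoc, mul_assoc, Finset.sum_mul] at hE
    linear_combination hE
  have h := congrArg (PowerSeries.coeff N) hE2
  rw [map_sub, map_sub, PowerSeries.coeff_C_mul, PowerSeries.coeff_C_mul, map_sum] at h
  rw [PowerSeries.coeff_derivative, PowerSeries.coeff_X_pow_mul'] at h
  simp_rw [PowerSeries.coeff_X_pow_mul'] at h
  rw [coeff_F p s t hp hs] at h
  have hL : ∀ i ∈ range p, (if i ≤ N then PowerSeries.coeff (N - i) (F p s t) else 0)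
      = (if i ≤ N then c p s t (N - i) else 0) := by
    intro i _
    split
    · rw [coeff_F p s t hp hs]
    · rfl
  rw [Finset.sum_congr rfl hL] at h
  have hD : (if p ≤ N then PowerSeries.coeff (N - p) (d⁄dX ℤ (F p s t)) else 0)
      = (if p ≤ N then ((N + 1 - p : ℕ) : ℤ) * c p s t (N + 1 - p) else 0) := by
    split
    · rename_i hle
      rw [PowerSeries.coeff_derivative, coeff_F p s t hp hs]
      rw [show N - p + 1 = N + 1 - p by omega]
      push_cast [show (N + 1 - p : ℕ) = N - p + 1 by omega]
      ring
    · rfl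
  rw [hD] at h
  have hXp : (if p - 1 ≤ N then PowerSeries.coeff (N - (p - 1)) (F p s t) else 0)
      = (if p - 1 ≤ N then c p s t (N + 1 - p) else 0) := by
    split
    · rw [coeff_F p s t hp hs, show N - (p - 1) = N + 1 - p by omega]
    · rfl
  rw [hXp] at h
  push_cast
  push_cast at h
  linear_combination h

lemma Ssum (p q s t : ℕ) (hp2 : 1 < p) (hs : 0 < s) (ht : 0 < t)
    (hpt : (p : ℤ) * t = q + s) (N : ℕ) :
    ∑ l ∈ Finset.Ioc 0 N, (if p ∣ l then -(q : ℤ) else (s : ℤ)) * c p s t (N - l)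
      = (N : ℤ) * c p s t N := by
  induction N using Nat.strong_induction_on with
  | _ N ih =>
  rcases Nat.eq_zero_or_pos N with rfl | hN
  · simp
  have hp : 0 < p := by omega
  have hstar := star p s t hp hs ht (N - 1)
  rw [show N - 1 + 1 = N from by omega] at hstar
  by_cases hNp : N < p
  · -- small case
    have hf : ∀ l ∈ Finset.Ioc 0 N,
        (if p ∣ l then -(q : ℤ) else (s : ℤ)) * c p s t (N - l)
          = (s : ℤ) * c p s t (N - l) := by
      intro l hl
      rw [Finset.mem_Ioc] at hl
      rw [if_neg (Nat.not_dvd_of_pos_of_lt hl.1 (by omega))]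
    rw [Finset.sum_congr rfl hf, ← Finset.mul_sum]
    rw [if_neg (by omega : ¬ p ≤ N - 1), if_neg (by omega : ¬ p - 1 ≤ N - 1)] at hstar
    have hfilter : (Finset.range p).filter (fun i => i ≤ N - 1) = Finset.range N := by
      ext i
      simp only [Finset.mem_filter, Finset.mem_range]
      omega
    rw [← Finset.sum_filter, hfilter] at hstar
    have hre : ∑ l ∈ Finset.Ioc 0 N, c p s t (N - l)
        = ∑ i ∈ Finset.range N, c p s t (N - 1 - i) := by
      refine Finset.sum_nbij' (fun l => l - 1) (fun i => i + 1) ?_ ?_ ?_ ?_ ?_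
      · intro l hl
        rw [Finset.mem_Ioc] at hl
        rw [Finset.mem_range]
        show l - 1 < N
        omega
      · intro i hi
        rw [Finset.mem_range] at hi
        rw [Finset.mem_Ioc]
        show 0 < i + 1 ∧ i + 1 ≤ N
        omega
      · intro l hl
        rw [Finset.mem_Ioc] at hl
        show l - 1 + 1 = l
        omega
      · intro i _
        show i + 1 - 1 = i
        omega
      · intro l hl
        rw [Finset.mem_Ioc] at hl
        rw [show N - 1 - (l - 1) = N - l from by omega]
    rw [hre]
    linear_combination -hstar
  · -- big case : p ≤ N
    push_neg at hNp
    -- split the sum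
    rw [← Finset.sum_Ioc_consecutive
      (fun l => (if p ∣ l then -(q : ℤ) else (s : ℤ)) * c p s t (N - l))
      (by omega : 0 ≤ p) hNp]
    -- tail part equals (N - p) * c (N - p)
    have htail : ∑ l ∈ Finset.Ioc p N,
        (if p ∣ l then -(q : ℤ) else (s : ℤ)) * c p s t (N - l)
        = ((N - p : ℕ) : ℤ) * c p s t (N - p) := by
      rw [← ih (N - p) (by omega)]
      refine Finset.sum_nbij' (fun l => l - p) (fun l' => l' + p) ?_ ?_ ?_ ?_ ?_
      · intro l hl
        rw [Finset.mem_Ioc] at hl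
        rw [Finset.mem_Ioc]
        show 0 < l - p ∧ l - p ≤ N - p
        omega
      · intro l' hl'
        rw [Finset.mem_Ioc] at hl'
        rw [Finset.mem_Ioc]
        show p < l' + p ∧ l' + p ≤ N
        omega
      · intro l hl
        rw [Finset.mem_Ioc] at hl
        show l - p + p = l
        omega
      · intro l' _
        show l' + p - p = l'
        omega
      · intro l hl
        rw [Finset.mem_Ioc] at hl
        have hdvd : p ∣ l ↔ p ∣ l - p := by
          constructor
          · intro h
            exact (Nat.dvd_sub h dvd_rfl)
          · intro h
            have := Nat.dvd_add h (dvd_refl p)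
            rwa [Nat.sub_add_cancel (by omega)] at this
        rw [show N - p - (l - p) = N - l from by omega]
        by_cases hd : p ∣ l
        · rw [if_pos hd, if_pos (hdvd.1 hd)]
        · rw [if_neg hd, if_neg (fun h => hd (hdvd.2 h))]
    rw [htail]
    -- head part
    have hIoc : Finset.Ioc 0 p = Finset.Ioc 0 (p - 1 + 1) := by
      rw [show p - 1 + 1 = p from by omega]
    rw [hIoc, Finset.sum_Ioc_succ_top (by omega : 0 ≤ p - 1),
      show p - 1 + 1 = p from by omega]
    have hfhead : ∀ l ∈ Finset.Ioc 0 (p - 1),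
        (if p ∣ l then -(q : ℤ) else (s : ℤ)) * c p s t (N - l)
          = (s : ℤ) * c p s t (N - l) := by
      intro l hl
      rw [Finset.mem_Ioc] at hl
      rw [if_neg (Nat.not_dvd_of_pos_of_lt hl.1 (by omega))]
    rw [Finset.sum_congr rfl hfhead, if_pos dvd_rfl]
    -- massage star
    have hg1 : (if p ≤ N - 1 then ((N - p : ℕ) : ℤ) * c p s t (N - p) else 0)
        = ((N - p : ℕ) : ℤ) * c p s t (N - p) := by
      by_cases hc : p ≤ N - 1
      · rw [if_pos hc]
      · rw [if_neg hc, show N - p = 0 from by omega]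
        simp
    rw [hg1, if_pos (show p - 1 ≤ N - 1 from by omega)] at hstar
    have hmid : ∑ i ∈ Finset.range p, (if i ≤ N - 1 then c p s t (N - 1 - i) else 0)
        = (∑ l ∈ Finset.Ioc 0 (p - 1), c p s t (N - l)) + c p s t (N - p) := by
      have hall : ∀ i ∈ Finset.range p, (if i ≤ N - 1 then c p s t (N - 1 - i) else 0)
          = c p s t (N - 1 - i) := by
        intro i hi
        rw [Finset.mem_range] at hi
        rw [if_pos (by omega)]
      rw [Finset.sum_congr rfl hall]
      have hre2 : ∑ i ∈ Finset.range p, c p s t (N - 1 - i)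
          = ∑ l ∈ Finset.Ioc 0 p, c p s t (N - l) := by
        refine Finset.sum_nbij' (fun i => i + 1) (fun l => l - 1) ?_ ?_ ?_ ?_ ?_
        · intro i hi
          rw [Finset.mem_range] at hi
          rw [Finset.mem_Ioc]
          show 0 < i + 1 ∧ i + 1 ≤ p
          omega
        · intro l hl
          rw [Finset.mem_Ioc] at hl
          rw [Finset.mem_range]
          show l - 1 < p
          omega
        · intro i _
          show i + 1 - 1 = i
          omega
        · intro l hl
          rw [Finset.mem_Ioc] at hl
          show l - 1 + 1 = l
          omega
        · intro i _
          rw [show N - (i + 1) = N - 1 - i from by omega]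
      rw [hre2, hIoc, Finset.sum_Ioc_succ_top (by omega : 0 ≤ p - 1),
        show p - 1 + 1 = p from by omega]
    rw [hmid] at hstar
    have hcast : ((p * t : ℕ) : ℤ) = (q : ℤ) + s := by
      push_cast
      linear_combination hpt
    rw [hcast] at hstar
    rw [← Finset.mul_sum]
    linear_combination -hstar

end



lemma A_zero (f : ℕ → ℤ) : A f 0 = 1 := by
  rw [A]
  rw [Finset.sum_eq_single_of_mem (1 : Equiv.Perm (Fin 0)) (Finset.mem_univ _)
    (fun b _ hb => absurd (Subsingleton.elim b 1) hb)]
  simp [Equiv.Perm.parts_partition]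

lemma c_zero (p s t : ℕ) : c p s t 0 = 1 := by
  rw [c]
  rw [Finset.sum_eq_single_of_mem ((0,0) : ℕ × ℕ)
    (by simp)
    (fun b hb hb0 => ?_)]
  · simp
  · simp only [Finset.mem_filter, Finset.mem_product, Finset.mem_range] at hb
    exfalso; apply hb0
    have h1 : b.1 = 0 := by omega
    have h2 : b.2 = 0 := by omega
    exact Prod.ext h1 h2

lemma main_eq (p q s t : ℕ) (hp2 : 1 < p) (hs : 0 < s) (ht : 0 < t)
    (hpt : (p : ℤ) * t = (q : ℤ) + s) (N : ℕ) :
    A (fun l => if p ∣ l then -(q : ℤ) else (s : ℤ)) N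
      = (N.factorial : ℤ) * c p s t N := by
  induction N using Nat.strong_induction_on with
  | _ N ih =>
  match N with
  | 0 =>
    rw [A_zero, c_zero]
    simp
  | (M + 1) =>
    rw [A_succ]
    have hterm : ∀ m ∈ Finset.range (M + 1),
        (M.descFactorial m : ℤ) * (if p ∣ (m + 1) then -(q : ℤ) else (s : ℤ))
            * A (fun l => if p ∣ l then -(q : ℤ) else (s : ℤ)) (M - m)
          = (M.factorial : ℤ)
            * ((if p ∣ (m + 1) then -(q : ℤ) else (s : ℤ)) * c p s t (M - m)) := by
      intro m hm
      rw [Finset.mem_range] at hm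
      rw [ih (M - m) (by omega)]
      rw [show (M.factorial) = (M - m).factorial * M.descFactorial m from
        (Nat.factorial_mul_descFactorial (show m ≤ M from by omega)).symm]
      push_cast
      ring
    rw [Finset.sum_congr rfl hterm, ← Finset.mul_sum]
    have hre : ∑ m ∈ Finset.range (M + 1),
        (if p ∣ (m + 1) then -(q : ℤ) else (s : ℤ)) * c p s t (M - m)
        = ∑ l ∈ Finset.Ioc 0 (M + 1),
            (if p ∣ l then -(q : ℤ) else (s : ℤ)) * c p s t (M + 1 - l) := by
      refine Finset.sum_nbij' (fun m => m + 1) (fun l => l - 1) ?_ ?_ ?_ ?_ ?_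
      · intro m hm
        rw [Finset.mem_range] at hm
        rw [Finset.mem_Ioc]
        show 0 < m + 1 ∧ m + 1 ≤ M + 1
        omega
      · intro l hl
        rw [Finset.mem_Ioc] at hl
        rw [Finset.mem_range]
        show l - 1 < M + 1
        omega
      · intro m _
        show m + 1 - 1 = m
        omega
      · intro l hl
        rw [Finset.mem_Ioc] at hl
        show l - 1 + 1 = l
        omega
      · intro m hm
        rw [Finset.mem_range] at hm
        rw [show M + 1 - (m + 1) = M - m from by omega]
    rw [hre, Ssum p q s t hp2 hs ht hpt (M + 1), Nat.factorial_succ]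
    push_cast
    ring

end Stmt15

theorem stmt_15 (p e q s n : ℕ) (hp : p.Prime) (he : 0 < e) (hq : q = p ^ e)
    (hs : q = s ^ 2) :
    (∑ σ : Equiv.Perm (Fin n),
        (σ.partition.parts.map (fun l => if p ∣ l then -(q : ℤ) else (s : ℤ))).prod)
      = (Nat.factorial n : ℤ) *
        ∑ ij ∈ (Finset.range (n + 1) ×ˢ Finset.range (n + 1)).filter
            (fun ij => ij.1 + p * ij.2 = n),
          (-1 : ℤ) ^ ij.2 * ((s - 1 + ij.1).choose (s - 1) : ℤ)
            * (((q + s) / p).choose ij.2 : ℤ) := by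
  have hp2 : 1 < p := hp.one_lt
  have hq0 : 0 < q := by
    rw [hq]
    exact pow_pos hp.pos e
  have hs0 : 0 < s := by
    rcases Nat.eq_zero_or_pos s with rfl | h
    · simp at hs
      omega
    · exact h
  have hpq : p ∣ q := by
    rw [hq]
    exact dvd_pow_self p he.ne'
  have hps : p ∣ s := by
    refine hp.dvd_of_dvd_pow (n := 2) ?_
    rw [← hs]
    exact hpq
  have hpqs : p ∣ q + s := Nat.dvd_add hpq hps
  have hptn : p * ((q + s) / p) = q + s := Nat.mul_div_cancel' hpqs
  have ht0 : 0 < (q + s) / p := by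
    rcases Nat.eq_zero_or_pos ((q + s) / p) with h | h
    · rw [h, mul_zero] at hptn
      omega
    · exact h
  have hpt : (p : ℤ) * ((q + s) / p : ℕ) = (q : ℤ) + s := by
    exact_mod_cast congrArg (Nat.cast : ℕ → ℤ) hptn
  exact Stmt15.main_eq p q s ((q + s) / p) hp2 hs0 ht0 hpt n
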